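/- Let X be a random feature with values in a measurable space 𝒳 and Y a label with values in {0,1}, with source distribution P and target distribution Q of (X,Y) such that 0 < P[Y=1] < 1 and 0 < Q[Y=1] < 1. Suppose P and Q are related through label shift, i.e., P[X ∈ M | Y = y] = Q[X ∈ M | Y = y] for all measurable M ⊆ 𝒳 and y ∈ {0,1}. Let η_P(X) be a version of P[Y=1 | X] and η_Q(X) a version of Q[Y=1 | X], and define the scores S = η_P(X) and S* = η_Q(X). Then the AUC of S computed under P equals the AUC of S* computed under Q: AUC_S = AUC_{S*}. -/

import Mathlib

open MeasureTheory ProbabilityTheory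

open scoped ENNReal NNReal

lemma null_of_pos_of_setIntegral_nonpos {𝒳 : Type*} [MeasurableSpace 𝒳] (μ : Measure 𝒳)
    {ρ : 𝒳 → ℝ} {N : Set 𝒳} (hN : MeasurableSet N) (hpos : ∀ x ∈ N, 0 < ρ x)
    (hint : IntegrableOn ρ N μ) (hle : ∫ x in N, ρ x ∂μ ≤ 0) : μ N = 0 := by
  have h0 : (0:𝒳 → ℝ) ≤ᵐ[μ.restrict N] ρ := by
    filter_upwards [ae_restrict_mem hN] with x hx using (hpos x hx).le
  have hz : ∫ x in N, ρ x ∂μ = 0 := le_antisymm hle (integral_nonneg_of_ae h0)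
  have heq : ρ =ᵐ[μ.restrict N] 0 := (integral_eq_zero_iff_of_nonneg_ae h0 hint).mp hz
  have hfalse : ∀ᵐ x ∂μ.restrict N, False := by
    filter_upwards [ae_restrict_mem hN, heq] with x hx hx0
    exact absurd hx0 (ne_of_gt (hpos x hx))
  have : μ.restrict N Set.univ = 0 := by
    simpa using (ae_iff.mp hfalse)
  simpa [Measure.restrict_apply MeasurableSet.univ, Set.univ_inter] using this

lemma ae_mem_Icc_of_setIntegral {𝒳 : Type*} [MeasurableSpace 𝒳] (μ κ : Measure 𝒳)
    [IsFiniteMeasure μ] (hκμ : ∀ M : Set 𝒳, MeasurableSet M → κ M ≤ μ M)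
    {η : 𝒳 → ℝ} (hη : Measurable η)
    (H : ∀ M : Set 𝒳, MeasurableSet M → ∫ x in M, η x ∂μ = (κ M).toReal) :
    ∀ᵐ x ∂μ, η x ∈ Set.Icc (0:ℝ) 1 := by
  have hbd : ∀ (a b : ℝ), IntegrableOn η {x | a < η x ∧ η x < b} μ := by
    intro a b
    refine Integrable.mono' (integrable_const (max |a| |b|)) hη.aestronglyMeasurable ?_
    filter_upwards [ae_restrict_mem (by
      exact (measurableSet_lt measurable_const hη).inter (measurableSet_lt hη measurable_const))]
      with x hx
    rcases hx with ⟨h1, h2⟩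
    rw [Real.norm_eq_abs, abs_le]
    constructor
    · calc -(max |a| |b|) ≤ -|a| := by simp
        _ ≤ a := neg_abs_le a
        _ ≤ η x := h1.le
    · exact h2.le.trans ((le_abs_self b).trans (le_max_right _ _))
  have hneg : μ {x | η x < 0} = 0 := by
    have : {x | η x < 0} = ⋃ n : ℕ, {x | -(n+1:ℝ) < η x ∧ η x < 0} := by
      ext x; simp only [Set.mem_setOf_eq, Set.mem_iUnion]
      constructor
      · intro hx
        obtain ⟨n, hn⟩ := exists_nat_gt (-η x)
        exact ⟨n, by linarith, hx⟩
      · rintro ⟨n, _, h⟩; exact h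
    rw [this]
    refine measure_iUnion_null fun n => ?_
    have hmN : MeasurableSet {x | -(n+1:ℝ) < η x ∧ η x < 0} :=
      (measurableSet_lt measurable_const hη).inter (measurableSet_lt hη measurable_const)
    refine null_of_pos_of_setIntegral_nonpos μ hmN (fun x hx => by simpa using neg_pos.mpr hx.2)
      ((hbd _ _).neg) ?_
    simp only [Pi.neg_apply]
    rw [integral_neg, neg_nonpos, H _ hmN]
    exact ENNReal.toReal_nonneg
  have hgt : μ {x | 1 < η x} = 0 := by
    have : {x | 1 < η x} = ⋃ n : ℕ, {x | 1 < η x ∧ η x < n+2} := by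
      ext x; simp only [Set.mem_setOf_eq, Set.mem_iUnion]
      constructor
      · intro hx
        obtain ⟨n, hn⟩ := exists_nat_gt (η x)
        exact ⟨n, hx, by linarith⟩
      · rintro ⟨n, h, _⟩; exact h
    rw [this]
    refine measure_iUnion_null fun n => ?_
    have hmN : MeasurableSet {x | 1 < η x ∧ η x < (n:ℝ)+2} :=
      (measurableSet_lt measurable_const hη).inter (measurableSet_lt hη measurable_const)
    have hint1 : IntegrableOn η {x | 1 < η x ∧ η x < (n:ℝ)+2} μ := hbd 1 (n+2)
    refine null_of_pos_of_setIntegral_nonpos μ hmN (fun x hx => by simpa using hx.1)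
      (hint1.sub (integrable_const 1)) ?_
    simp only [Pi.sub_apply]
    rw [integral_sub hint1 (integrable_const 1), sub_nonpos, H _ hmN]
    have := hκμ _ hmN
    calc (κ {x | 1 < η x ∧ η x < (n:ℝ)+2}).toReal
        ≤ (μ {x | 1 < η x ∧ η x < (n:ℝ)+2}).toReal :=
          ENNReal.toReal_mono (measure_ne_top μ _) this
      _ = ∫ x in {x | 1 < η x ∧ η x < (n:ℝ)+2}, (1:ℝ) ∂μ := by
          rw [setIntegral_const]; simp; rfl
  filter_upwards [measure_eq_zero_iff_ae_notMem.mp hneg, measure_eq_zero_iff_ae_notMem.mp hgt] with x h1 h2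
  simp only [Set.mem_setOf_eq, not_lt] at h1 h2
  exact ⟨h1, h2⟩

lemma withDensity_eq_of_setIntegral {𝒳 : Type*} [MeasurableSpace 𝒳] (μ κ : Measure 𝒳)
    [IsFiniteMeasure κ] {g : 𝒳 → ℝ} (hgi : Integrable g μ)
    (hg0 : 0 ≤ᵐ[μ] g)
    (H : ∀ M : Set 𝒳, MeasurableSet M → ∫ x in M, g x ∂μ = (κ M).toReal) :
    μ.withDensity (fun x => ENNReal.ofReal (g x)) = κ := by
  ext M hM
  rw [withDensity_apply _ hM,
    ← ofReal_integral_eq_lintegral_ofReal hgi.integrableOn (ae_restrict_of_ae hg0),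
    H _ hM, ENNReal.ofReal_toReal (measure_ne_top κ M)]

lemma AUC_map_strictMono (μ₀ μ₁ : MeasureTheory.Measure ℝ) [SFinite μ₀] [SFinite μ₁]
    {ψ : ℝ → ℝ} (hψ : StrictMono ψ) :
    (((μ₁.map ψ).prod (μ₀.map ψ)) {p : ℝ × ℝ | p.1 > p.2}).toReal
        + (1 / 2) * (((μ₁.map ψ).prod (μ₀.map ψ)) {p : ℝ × ℝ | p.1 = p.2}).toReal
      = ((μ₁.prod μ₀) {p : ℝ × ℝ | p.1 > p.2}).toReal
        + (1 / 2) * ((μ₁.prod μ₀) {p : ℝ × ℝ | p.1 = p.2}).toReal := by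
  have hm : Measurable ψ := hψ.monotone.measurable
  have hmap : (μ₁.map ψ).prod (μ₀.map ψ) = (μ₁.prod μ₀).map (Prod.map ψ ψ) :=
    Measure.map_prod_map _ _ hm hm
  have hmm : Measurable (Prod.map ψ ψ) := hm.prodMap hm
  have hlt : MeasurableSet {p : ℝ × ℝ | p.1 > p.2} := measurableSet_lt measurable_snd measurable_fst
  have heq : MeasurableSet {p : ℝ × ℝ | p.1 = p.2} :=
    measurableSet_eq_fun measurable_fst measurable_snd
  have h1 : Prod.map ψ ψ ⁻¹' {p : ℝ × ℝ | p.1 > p.2} = {p : ℝ × ℝ | p.1 > p.2} := by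
    ext p; simp [Prod.map, hψ.lt_iff_lt]
  have h2 : Prod.map ψ ψ ⁻¹' {p : ℝ × ℝ | p.1 = p.2} = {p : ℝ × ℝ | p.1 = p.2} := by
    ext p; simp [Prod.map, hψ.injective.eq_iff]
  rw [hmap, Measure.map_apply hmm hlt, Measure.map_apply hmm heq, h1, h2]

lemma strictMono_link {c₁ c₀ : ℝ} (h1 : 0 < c₁) (h0 : 0 < c₀) :
    StrictMono (fun s : ℝ =>
      if s < 0 then s else if 1 < s then s else c₁*s/(c₁*s+c₀*(1-s))) := by
  have key : ∀ s : ℝ, ¬ s < 0 → ¬ 1 < s → 0 < c₁*s+c₀*(1-s) := by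
    intro s hs hs1; push_neg at hs hs1
    rcases eq_or_lt_of_le hs with h | h
    · nlinarith
    · nlinarith [mul_pos h1 h, mul_nonneg h0.le (by linarith : (0:ℝ) ≤ 1-s)]
  have mem0 : ∀ s : ℝ, ¬ s < 0 → ¬ 1 < s → 0 ≤ c₁*s/(c₁*s+c₀*(1-s)) := by
    intro s hs hs1
    have := key s hs hs1; push_neg at hs hs1
    exact div_nonneg (by nlinarith) this.le
  have mem1 : ∀ s : ℝ, ¬ s < 0 → ¬ 1 < s → c₁*s/(c₁*s+c₀*(1-s)) ≤ 1 := by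
    intro s hs hs1
    rw [div_le_one (key s hs hs1)]
    push_neg at hs hs1; nlinarith
  intro s t hst
  simp only
  by_cases hs : s < 0
  · by_cases ht : t < 0
    · simpa [hs, ht] using hst
    · by_cases ht1 : 1 < t
      · rw [if_pos hs, if_neg ht, if_pos ht1]; exact hst
      · rw [if_pos hs, if_neg ht, if_neg ht1]
        exact lt_of_lt_of_le hs (mem0 t ht ht1)
  · by_cases hs1 : 1 < s
    · have ht : ¬ t < 0 := by push_neg at hs ⊢; linarith
      have ht1 : 1 < t := lt_trans hs1 hst
      rw [if_neg hs, if_pos hs1, if_neg ht, if_pos ht1]; exact hst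
    · by_cases ht : t < 0
      · exact absurd (lt_trans hst ht) hs
      · by_cases ht1 : 1 < t
        · rw [if_neg hs, if_neg hs1, if_neg ht, if_pos ht1]
          exact lt_of_le_of_lt (mem1 s hs hs1) ht1
        · rw [if_neg hs, if_neg hs1, if_neg ht, if_neg ht1]
          rw [div_lt_div_iff₀ (key s hs hs1) (key t ht ht1)]
          nlinarith [mul_pos (mul_pos h1 h0) (sub_pos.mpr hst)]

/-- The AUC of a score whose class-conditional laws (given label 0 and label 1) are `μ₀` and
`μ₁`: `AUC = μ*[S₁ > S₀] + ½·μ*[S₁ = S₀]` where `S₀, S₁` are independent with laws `μ₀, μ₁`. -/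
noncomputable def AUC (μ₀ μ₁ : MeasureTheory.Measure ℝ) : ℝ :=
  ((μ₁.prod μ₀) {p : ℝ × ℝ | p.1 > p.2}).toReal
    + (1 / 2) * ((μ₁.prod μ₀) {p : ℝ × ℝ | p.1 = p.2}).toReal

/-- Under label shift between a source distribution `P` and a target distribution `Q` of a
feature-label pair (labels in `{0,1}`, here `Bool`), the AUC of the source posterior
probability `η_P(X)` computed under `P` equals the AUC of the target posterior probability
`η_Q(X)` computed under `Q`. -/
theorem auc_labelShift_invariant
    {𝒳 : Type*} [MeasurableSpace 𝒳]
    (P Q : Measure (𝒳 × Bool)) [IsProbabilityMeasure P] [IsProbabilityMeasure Q]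
    (hp0 : 0 < P {ω : 𝒳 × Bool | ω.2 = true}) (hp1 : P {ω : 𝒳 × Bool | ω.2 = true} < 1)
    (hq0 : 0 < Q {ω : 𝒳 × Bool | ω.2 = true}) (hq1 : Q {ω : 𝒳 × Bool | ω.2 = true} < 1)
    -- label shift: the class-conditional feature distributions agree under `P` and `Q`
    (hshift : ∀ y : Bool,
      (P[|{ω : 𝒳 × Bool | ω.2 = y}]).map Prod.fst = (Q[|{ω : 𝒳 × Bool | ω.2 = y}]).map Prod.fst)
    (ηP ηQ : 𝒳 → ℝ) (hηP : Measurable ηP) (hηQ : Measurable ηQ)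
    -- `ηP` is a version of `P[Y = 1 | X]`
    (hηPver : ∀ M : Set 𝒳, MeasurableSet M →
      ∫ x in M, ηP x ∂(P.map Prod.fst) = (P (M ×ˢ {true})).toReal)
    -- `ηQ` is a version of `Q[Y = 1 | X]`
    (hηQver : ∀ M : Set 𝒳, MeasurableSet M →
      ∫ x in M, ηQ x ∂(Q.map Prod.fst) = (Q (M ×ˢ {true})).toReal) :
    AUC ((P[|{ω : 𝒳 × Bool | ω.2 = false}]).map (fun ω => ηP ω.1))
        ((P[|{ω : 𝒳 × Bool | ω.2 = true}]).map (fun ω => ηP ω.1))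
      = AUC ((Q[|{ω : 𝒳 × Bool | ω.2 = false}]).map (fun ω => ηQ ω.1))
            ((Q[|{ω : 𝒳 × Bool | ω.2 = true}]).map (fun ω => ηQ ω.1)) := by
  classical
  -- basic sets and measurability
  set A : Bool → Set (𝒳 × Bool) := fun y => {ω : 𝒳 × Bool | ω.2 = y} with hA_def
  have hA : ∀ y, MeasurableSet (A y) := fun y => measurable_snd (measurableSet_singleton y)
  have hAcompl : A false = (A true)ᶜ := by
    ext ω; simp [hA_def]
  -- the measures
  set μP := P.map Prod.fst with hμP_def
  set μQ := Q.map Prod.fst with hμQ_def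
  haveI : IsProbabilityMeasure μP := Measure.isProbabilityMeasure_map measurable_fst.aemeasurable
  haveI : IsProbabilityMeasure μQ := Measure.isProbabilityMeasure_map measurable_fst.aemeasurable
  haveI hPcond : ∀ y, IsProbabilityMeasure (P[|A y]) := by
    intro y
    apply cond_isProbabilityMeasure
    cases y
    · rw [hAcompl, prob_compl_eq_one_sub (hA true)]
      simp only [ne_eq, tsub_eq_zero_iff_le, not_le]
      exact hp1
    · exact hp0.ne'
  set ν : Bool → Measure 𝒳 := fun y => (P[|A y]).map Prod.fst with hν_def
  haveI hνprob : ∀ y, IsProbabilityMeasure (ν y) := fun y =>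
    Measure.isProbabilityMeasure_map measurable_fst.aemeasurable
  -- numbers
  have hπP_ne_top : P (A true) ≠ ⊤ := (hp1.trans ENNReal.one_lt_top).ne
  have hπQ_ne_top : Q (A true) ≠ ⊤ := (hq1.trans ENNReal.one_lt_top).ne
  set p := (P (A true)).toReal with hp_def
  set q := (Q (A true)).toReal with hq_def
  have hp_pos : 0 < p := ENNReal.toReal_pos hp0.ne' hπP_ne_top
  have hq_pos : 0 < q := ENNReal.toReal_pos hq0.ne' hπQ_ne_top
  have hp_lt1 : p < 1 := by
    have := (ENNReal.toReal_lt_toReal hπP_ne_top ENNReal.one_ne_top).mpr hp1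
    simpa using this
  have hq_lt1 : q < 1 := by
    have := (ENNReal.toReal_lt_toReal hπQ_ne_top ENNReal.one_ne_top).mpr hq1
    simpa using this
  -- conditional measure applied to sets
  have hcond : ∀ (R : Measure (𝒳 × Bool)) (y : Bool) (M : Set 𝒳), MeasurableSet M →
      ((R[|A y]).map Prod.fst) M = (R (A y))⁻¹ * R (M ×ˢ ({y} : Set Bool)) := by
    intro R y M hM
    rw [Measure.map_apply measurable_fst hM, cond_apply (hA y)]
    have hset : A y ∩ Prod.fst ⁻¹' M = M ×ˢ ({y} : Set Bool) := by
      ext ⟨x, b⟩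
      simp only [hA_def, Set.mem_inter_iff, Set.mem_setOf_eq, Set.mem_preimage, Set.mem_prod,
        Set.mem_singleton_iff]
      tauto
    rw [hset]
  -- product-set measures via ν
  have hPprod : ∀ (y : Bool) (M : Set 𝒳), MeasurableSet M →
      P (M ×ˢ ({y} : Set Bool)) = P (A y) * ν y M := by
    intro y M hM
    have h0 : P (A y) ≠ 0 := by
      cases y
      · rw [hAcompl, prob_compl_eq_one_sub (hA true)]
        simp only [ne_eq, tsub_eq_zero_iff_le, not_le]
        exact hp1
      · exact hp0.ne'
    have htop : P (A y) ≠ ⊤ := measure_ne_top P _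
    rw [hν_def]
    simp only
    rw [hcond P y M hM, ← mul_assoc, ENNReal.mul_inv_cancel h0 htop, one_mul]
  have hQprod : ∀ (y : Bool) (M : Set 𝒳), MeasurableSet M →
      Q (M ×ˢ ({y} : Set Bool)) = Q (A y) * ν y M := by
    intro y M hM
    have h0 : Q (A y) ≠ 0 := by
      cases y
      · rw [hAcompl, prob_compl_eq_one_sub (hA true)]
        simp only [ne_eq, tsub_eq_zero_iff_le, not_le]
        exact hq1
      · exact hq0.ne'
    have htop : Q (A y) ≠ ⊤ := measure_ne_top Q _
    rw [hν_def]
    simp only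
    rw [hshift y, hcond Q y M hM, ← mul_assoc, ENNReal.mul_inv_cancel h0 htop, one_mul]
  -- total measure decomposition
  have hsplit : ∀ (R : Measure (𝒳 × Bool)) (M : Set 𝒳), MeasurableSet M →
      (R.map Prod.fst) M = R (M ×ˢ ({true} : Set Bool)) + R (M ×ˢ ({false} : Set Bool)) := by
    intro R M hM
    rw [Measure.map_apply measurable_fst hM]
    have : (Prod.fst ⁻¹' M : Set (𝒳 × Bool))
        = (M ×ˢ ({true} : Set Bool)) ∪ (M ×ˢ ({false} : Set Bool)) := by
      ext ω
      simp only [Set.mem_preimage, Set.mem_union, Set.mem_prod, Set.mem_singleton_iff]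
      cases h : ω.2 <;> simp [h]
    rw [this, measure_union _ (hM.prod (measurableSet_singleton false))]
    · rw [Set.disjoint_left]
      rintro ω ⟨-, h1⟩ ⟨-, h2⟩
      simp only [Set.mem_singleton_iff] at h1 h2
      rw [h1] at h2; simp at h2
  -- complement probabilities
  have hPfalse : P (A false) = 1 - P (A true) := by
    rw [hAcompl, prob_compl_eq_one_sub (hA true)]
  have hQfalse : Q (A false) = 1 - Q (A true) := by
    rw [hAcompl, prob_compl_eq_one_sub (hA true)]
  have hPfalse' : (P (A false)).toReal = 1 - p := by
    rw [hPfalse, ENNReal.toReal_sub_of_le hp1.le ENNReal.one_ne_top]; simp [hp_def]; rfl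
  have hQfalse' : (Q (A false)).toReal = 1 - q := by
    rw [hQfalse, ENNReal.toReal_sub_of_le hq1.le ENNReal.one_ne_top]; simp [hq_def]; rfl
  -- real-valued set functions
  set n₁ : Set 𝒳 → ℝ := fun M => (ν true M).toReal with hn₁_def
  set n₀ : Set 𝒳 → ℝ := fun M => (ν false M).toReal with hn₀_def
  have hνfin : ∀ (y : Bool) (M : Set 𝒳), ν y M ≠ ⊤ := fun y M => measure_ne_top _ _
  have hPt : ∀ M : Set 𝒳, MeasurableSet M →
      (P (M ×ˢ ({true} : Set Bool))).toReal = p * n₁ M := by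
    intro M hM; rw [hPprod true M hM, ENNReal.toReal_mul]
  have hPf : ∀ M : Set 𝒳, MeasurableSet M →
      (P (M ×ˢ ({false} : Set Bool))).toReal = (1-p) * n₀ M := by
    intro M hM; rw [hPprod false M hM, ENNReal.toReal_mul, hPfalse']
  have hQt : ∀ M : Set 𝒳, MeasurableSet M →
      (Q (M ×ˢ ({true} : Set Bool))).toReal = q * n₁ M := by
    intro M hM; rw [hQprod true M hM, ENNReal.toReal_mul]
  have hQf : ∀ M : Set 𝒳, MeasurableSet M →
      (Q (M ×ˢ ({false} : Set Bool))).toReal = (1-q) * n₀ M := by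
    intro M hM; rw [hQprod false M hM, ENNReal.toReal_mul, hQfalse']
  have hμPreal : ∀ M : Set 𝒳, MeasurableSet M → (μP M).toReal = p * n₁ M + (1-p) * n₀ M := by
    intro M hM
    rw [hμP_def, hsplit P M hM, ENNReal.toReal_add (measure_ne_top _ _) (measure_ne_top _ _),
      hPt M hM, hPf M hM]
  have hμQreal : ∀ M : Set 𝒳, MeasurableSet M → (μQ M).toReal = q * n₁ M + (1-q) * n₀ M := by
    intro M hM
    rw [hμQ_def, hsplit Q M hM, ENNReal.toReal_add (measure_ne_top _ _) (measure_ne_top _ _),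
      hQt M hM, hQf M hM]
  -- posterior in [0,1] a.e.
  have hPIcc : ∀ᵐ x ∂μP, ηP x ∈ Set.Icc (0:ℝ) 1 := by
    refine ae_mem_Icc_of_setIntegral μP (P (A true) • ν true) ?_ hηP ?_
    · intro M hM
      rw [Measure.smul_apply, smul_eq_mul, ← hPprod true M hM, hμP_def, hsplit P M hM]
      exact le_self_add
    · intro M hM
      rw [hηPver M hM, Measure.smul_apply, smul_eq_mul, ← hPprod true M hM]
  have hQIcc : ∀ᵐ x ∂μQ, ηQ x ∈ Set.Icc (0:ℝ) 1 := by
    refine ae_mem_Icc_of_setIntegral μQ (Q (A true) • ν true) ?_ hηQ ?_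
    · intro M hM
      rw [Measure.smul_apply, smul_eq_mul, ← hQprod true M hM, hμQ_def, hsplit Q M hM]
      exact le_self_add
    · intro M hM
      rw [hηQver M hM, Measure.smul_apply, smul_eq_mul, ← hQprod true M hM]
  -- integrability
  have hηPint : Integrable ηP μP := by
    refine Integrable.mono' (integrable_const 1) hηP.aestronglyMeasurable ?_
    filter_upwards [hPIcc] with x hx
    rw [Real.norm_eq_abs, abs_le]; exact ⟨by linarith [hx.1], hx.2⟩
  -- constants
  set c₁ : ℝ := q / p with hc₁_def
  set c₀ : ℝ := (1-q) / (1-p) with hc₀_def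
  have hc₁_pos : 0 < c₁ := div_pos hq_pos hp_pos
  have hc₀_pos : 0 < c₀ := div_pos (by linarith) (by linarith)
  have hc₁p : c₁ * p = q := div_mul_cancel₀ q hp_pos.ne'
  have hc₀p : c₀ * (1-p) = 1-q := div_mul_cancel₀ (1-q) (by linarith : (1:ℝ)-p ≠ 0)
  -- the density g
  set g : 𝒳 → ℝ := fun x => c₁ * ηP x + c₀ * (1 - ηP x) with hg_def
  have hg_meas : Measurable g := by
    apply Measurable.add
    · exact hηP.const_mul c₁
    · exact (measurable_const.sub hηP).const_mul c₀
  have hg_int : Integrable g μP := by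
    apply Integrable.add
    · exact hηPint.const_mul c₁
    · exact ((integrable_const (1:ℝ)).sub hηPint).const_mul c₀
  have hg_lb : ∀ᵐ x ∂μP, min c₁ c₀ ≤ g x := by
    filter_upwards [hPIcc] with x hx
    rcases le_total c₁ c₀ with h | h
    · rw [min_eq_left h]
      have : c₁ * ηP x + c₀ * (1 - ηP x) ≥ c₁ * ηP x + c₁ * (1 - ηP x) := by
        nlinarith [hx.1, hx.2]
      calc c₁ = c₁ * ηP x + c₁ * (1 - ηP x) := by ring
        _ ≤ g x := this
    · rw [min_eq_right h]
      have : c₁ * ηP x + c₀ * (1 - ηP x) ≥ c₀ * ηP x + c₀ * (1 - ηP x) := by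
        nlinarith [hx.1, hx.2]
      calc c₀ = c₀ * ηP x + c₀ * (1 - ηP x) := by ring
        _ ≤ g x := this
  have hmin_pos : 0 < min c₁ c₀ := lt_min hc₁_pos hc₀_pos
  have hg0 : 0 ≤ᵐ[μP] g := by
    filter_upwards [hg_lb] with x hx using le_trans hmin_pos.le hx
  -- the integral identity for g
  have hPver' : ∀ M : Set 𝒳, MeasurableSet M → ∫ x in M, ηP x ∂μP = p * n₁ M := by
    intro M hM; rw [hηPver M hM, hPt M hM]
  have hgI : ∀ M : Set 𝒳, MeasurableSet M → ∫ x in M, g x ∂μP = (μQ M).toReal := by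
    intro M hM
    have hi1 : IntegrableOn (fun x => c₁ * ηP x) M μP := (hηPint.const_mul c₁).integrableOn
    have hi2 : IntegrableOn (fun x => c₀ * (1 - ηP x)) M μP := by
      have : Integrable (fun x => (1:ℝ) - ηP x) μP := (integrable_const (1:ℝ)).sub hηPint
      exact (this.const_mul c₀).integrableOn
    have hi3 : IntegrableOn (fun x => (1:ℝ)) M μP := (integrable_const 1).integrableOn
    rw [hg_def]
    simp only
    rw [integral_add hi1 hi2, integral_const_mul, integral_const_mul,
      integral_sub hi3 hηPint.integrableOn,
      setIntegral_const, hPver' M hM, hμQreal M hM]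
    have h4 : (μP M).toReal = p * n₁ M + (1-p) * n₀ M := hμPreal M hM
    simp only [smul_eq_mul, mul_one]
    rw [Measure.real, h4]
    linear_combination (n₁ M) * hc₁p + (n₀ M) * hc₀p
  -- μQ as density against μP
  have hQP : μP.withDensity (fun x => ENNReal.ofReal (g x)) = μQ :=
    withDensity_eq_of_setIntegral μP μQ hg_int hg0 hgI
  -- μQ-null implies μP-null
  have habs : ∀ N : Set 𝒳, MeasurableSet N → μQ N = 0 → μP N = 0 := by
    intro N hN h0
    have h1 : ∫ x in N, g x ∂μP = 0 := by rw [hgI N hN, h0]; simp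
    have h2 : min c₁ c₀ * (μP N).toReal ≤ ∫ x in N, g x ∂μP := by
      have : ∫ x in N, (min c₁ c₀ : ℝ) ∂μP ≤ ∫ x in N, g x ∂μP := by
        apply integral_mono_ae (integrable_const _) hg_int.integrableOn
        exact ae_restrict_of_ae hg_lb
      rwa [setIntegral_const, smul_eq_mul, mul_comm] at this
    have h3 : (μP N).toReal = 0 := by
      nlinarith [ENNReal.toReal_nonneg (a := μP N)]
    exact (ENNReal.toReal_eq_zero_iff _).mp h3 |>.resolve_right (measure_ne_top _ _)
  have hQIccP : ∀ᵐ x ∂μP, ηQ x ∈ Set.Icc (0:ℝ) 1 := by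
    have hset : MeasurableSet {x | ηQ x ∈ Set.Icc (0:ℝ) 1} :=
      hηQ (measurableSet_Icc)
    have h0 : μQ {x | ηQ x ∈ Set.Icc (0:ℝ) 1}ᶜ = 0 := by
      rw [Set.compl_setOf]
      exact ae_iff.mp hQIcc
    have h1 := habs _ hset.compl h0
    refine ae_iff.mpr ?_
    rw [← Set.compl_setOf]
    exact h1
  have hηQint : Integrable ηQ μP := by
    refine Integrable.mono' (integrable_const 1) hηQ.aestronglyMeasurable ?_
    filter_upwards [hQIccP] with x hx
    rw [Real.norm_eq_abs, abs_le]; exact ⟨by linarith [hx.1], hx.2⟩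
  -- change of variables for ηQ integrals
  have hCOV : ∀ M : Set 𝒳, MeasurableSet M →
      ∫ x in M, ηQ x ∂μQ = ∫ x in M, g x * ηQ x ∂μP := by
    intro M hM
    rw [← hQP]
    have : (fun x => ENNReal.ofReal (g x)) = (fun x => ((Real.toNNReal (g x) : ℝ≥0) : ℝ≥0∞)) :=
      rfl
    rw [this, setIntegral_withDensity_eq_setIntegral_smul hg_meas.real_toNNReal _ hM]
    apply integral_congr_ae
    filter_upwards [ae_restrict_of_ae hg0] with x hx
    simp [NNReal.smul_def, Real.coe_toNNReal _ hx]
  -- key a.e. identity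
  have hkey : (fun x => g x * ηQ x) =ᵐ[μP] (fun x => c₁ * ηP x) := by
    have hgηQ_int : Integrable (fun x => g x * ηQ x) μP := by
      refine Integrable.mono' (hg_int.abs) ((hg_meas.mul hηQ).aestronglyMeasurable) ?_
      filter_upwards [hQIccP, hg0] with x hx hx0
      rw [Real.norm_eq_abs, abs_mul]
      calc |g x| * |ηQ x| ≤ |g x| * 1 := by
            apply mul_le_mul_of_nonneg_left _ (abs_nonneg _)
            rw [abs_le]; exact ⟨by linarith [hx.1], hx.2⟩
        _ = |g x| := mul_one _
    refine ae_eq_of_forall_setIntegral_eq_of_sigmaFinite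
      (fun s hs _ => hgηQ_int.integrableOn)
      (fun s hs _ => (hηPint.const_mul c₁).integrableOn) ?_
    intro s hs _
    rw [← hCOV s hs, hηQver s hs, hQt s hs, integral_const_mul, hPver' s hs, ← mul_assoc, hc₁p]
  -- the link function
  set ψ : ℝ → ℝ := fun s => if s < 0 then s else if 1 < s then s else c₁*s/(c₁*s+c₀*(1-s))
    with hψ_def
  have hψmono : StrictMono ψ := strictMono_link hc₁_pos hc₀_pos
  have hψmeas : Measurable ψ := hψmono.monotone.measurable
  have hlink : ηQ =ᵐ[μP] (fun x => ψ (ηP x)) := by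
    filter_upwards [hPIcc, hQIccP, hg_lb, hkey] with x hx hxQ hxg hxk
    have hgpos : 0 < g x := lt_of_lt_of_le hmin_pos hxg
    have hψval : ψ (ηP x) = c₁ * ηP x / (c₁ * ηP x + c₀ * (1 - ηP x)) := by
      rw [hψ_def]
      simp only
      rw [if_neg (not_lt.mpr hx.1), if_neg (not_lt.mpr hx.2)]
    rw [hψval]
    have hgx : g x = c₁ * ηP x + c₀ * (1 - ηP x) := rfl
    rw [← hgx, eq_div_iff hgpos.ne']
    rw [mul_comm]
    exact hxk
  -- transfer a.e. to the conditional measures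
  have hνabs : ∀ y : Bool, ν y ≪ μP := by
    intro y
    refine Measure.AbsolutelyContinuous.mk fun N hN h0 => ?_
    have h1 : P (N ×ˢ ({y} : Set Bool)) = 0 := by
      have hsub : N ×ˢ ({y} : Set Bool) ⊆ Prod.fst ⁻¹' N := fun ω hω => hω.1
      have : P (Prod.fst ⁻¹' N) = 0 := by
        rw [← Measure.map_apply measurable_fst hN, ← hμP_def]; exact h0
      exact measure_mono_null hsub this
    rw [hν_def]
    simp only
    rw [hcond P y N hN, h1, mul_zero]
  have hlinkν : ∀ y : Bool, ηQ =ᵐ[ν y] (fun x => ψ (ηP x)) := fun y => (hνabs y).ae_eq hlink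
  -- rewrite the four map measures
  have hmapP : ∀ y : Bool, (P[|A y]).map (fun ω : 𝒳 × Bool => ηP ω.1) = (ν y).map ηP := by
    intro y
    rw [hν_def]
    simp only
    rw [Measure.map_map hηP measurable_fst]
    rfl
  have hmapQ : ∀ y : Bool, (Q[|A y]).map (fun ω : 𝒳 × Bool => ηQ ω.1)
      = ((ν y).map ηP).map ψ := by
    intro y
    have h1 : (Q[|A y]).map (fun ω : 𝒳 × Bool => ηQ ω.1) = ((Q[|A y]).map Prod.fst).map ηQ := by
      rw [Measure.map_map hηQ measurable_fst]; rfl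
    have h2 : Measure.map Prod.fst P[|{ω : 𝒳 × Bool | ω.2 = y}] = ν y := rfl
    rw [h1, ← hshift y, h2]
    calc (ν y).map ηQ = (ν y).map (fun x => ψ (ηP x)) := Measure.map_congr (hlinkν y)
      _ = ((ν y).map ηP).map ψ := (Measure.map_map hψmeas hηP).symm
  -- conclude
  haveI : ∀ y : Bool, IsProbabilityMeasure ((ν y).map ηP) := fun y =>
    Measure.isProbabilityMeasure_map hηP.aemeasurable
  haveI : SFinite ((ν false).map ηP) := inferInstance
  haveI : SFinite ((ν true).map ηP) := inferInstance
  rw [hmapP false, hmapP true, hmapQ false, hmapQ true]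
  unfold AUC
  exact (AUC_map_strictMono ((ν false).map ηP) ((ν true).map ηP) hψmono).symm
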